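/- Let A_1, ..., A_z be square tropical matrices over ℝ (all entries finite), each of size at least 2×2, with 0 on all diagonals and whose off-diagonal entries, taken all together, form a basis of a free abelian subgroup of (ℝ, +) and are all nonzero. Then for α ≠ β, the column spaces C(A_α) and C(A_β) are not isomorphic as T-semimodules. -/

import Mathlib

open scoped Classical

/-- The tropical (max-plus) semiring carrier: `ℝ ∪ {-∞}`, where `⊔` is tropical
addition (max) and `+` is tropical multiplication (with `⊥ = -∞` absorbing). -/
abbrev Trop : Type := WithBot ℝ

/-- Tropical matrix multiplication: `(A ⊗ B) i j = max_k (A i k + B k j)`. -/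
def tmul {n m p : ℕ} (A : Fin n → Fin m → Trop) (B : Fin m → Fin p → Trop) :
    Fin n → Fin p → Trop :=
  fun i j => Finset.univ.sup fun k => A i k + B k j

/-- Tropical matrix-vector multiplication (column vector on the right). -/
def tvmul {n m : ℕ} (A : Fin n → Fin m → Trop) (v : Fin m → Trop) : Fin n → Trop :=
  fun i => Finset.univ.sup fun k => A i k + v k

/-- Tropical vector-matrix multiplication (row vector on the left). -/
def vtmul {n m : ℕ} (v : Fin n → Trop) (A : Fin n → Fin m → Trop) : Fin m → Trop :=
  fun j => Finset.univ.sup fun k => v k + A k j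

/-- The tropical identity matrix: `0` on the diagonal, `-∞` elsewhere. -/
def tId (n : ℕ) : Fin n → Fin n → Trop :=
  fun i j => if i = j then ((0 : ℝ) : Trop) else ⊥

/-- A monomial matrix: exactly one entry different from `-∞` in each row and each column. -/
def IsMonomial {n : ℕ} (P : Fin n → Fin n → Trop) : Prop :=
  (∀ i, ∃! j, P i j ≠ ⊥) ∧ (∀ j, ∃! i, P i j ≠ ⊥)

/-- A `T`-subsemimodule of `T^n`: closed under tropical addition (max) and scaling. -/
def IsTropSubmodule {n : ℕ} (S : Set (Fin n → Trop)) : Prop :=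
  (∀ x ∈ S, ∀ y ∈ S, x ⊔ y ∈ S) ∧
  (∀ c : Trop, ∀ x ∈ S, (fun i => c + x i) ∈ S)

/-- The `T`-subsemimodule generated by a set of vectors. -/
def genBy {n : ℕ} (G : Set (Fin n → Trop)) : Set (Fin n → Trop) :=
  ⋂₀ {S | IsTropSubmodule S ∧ G ⊆ S}

/-- The column space of a tropical matrix. -/
def colSpace {n m : ℕ} (A : Fin n → Fin m → Trop) : Set (Fin n → Trop) :=
  genBy {v | ∃ j, v = fun i => A i j}

/-- The row space of a tropical matrix. -/
def rowSpace {n m : ℕ} (A : Fin n → Fin m → Trop) : Set (Fin m → Trop) :=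
  genBy {v | ∃ i, v = fun j => A i j}

/-- The column rank: minimum cardinality of a generating set of the column space. -/
noncomputable def colRank {n m : ℕ} (A : Fin n → Fin m → Trop) : ℕ :=
  sInf {k | ∃ G : Finset (Fin n → Trop), G.card = k ∧ genBy (↑G) = colSpace A}

/-- The row rank: minimum cardinality of a generating set of the row space. -/
noncomputable def rowRank {n m : ℕ} (A : Fin n → Fin m → Trop) : ℕ :=
  sInf {k | ∃ G : Finset (Fin m → Trop), G.card = k ∧ genBy (↑G) = rowSpace A}

/-- Isomorphism of tropical subsemimodules (given by a bijection preserving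
tropical addition and scaling). -/
def TropIso {n m : ℕ} (S : Set (Fin n → Trop)) (S' : Set (Fin m → Trop)) : Prop :=
  ∃ f : (Fin n → Trop) → (Fin m → Trop),
    Set.BijOn f S S' ∧
    (∀ x ∈ S, ∀ y ∈ S, f (x ⊔ y) = f x ⊔ f y) ∧
    (∀ c : Trop, ∀ x ∈ S, f (fun i => c + x i) = fun i => c + f x i)

/-- The `H`-class of a matrix `A` in `M(T)` (among matrices of the same shape),
characterised by equality of column and row spaces. -/
def HSet {n m : ℕ} (A : Fin n → Fin m → Trop) : Set (Fin n → Fin m → Trop) :=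
  {B | colSpace B = colSpace A ∧ rowSpace B = rowSpace A}

/-- Adjacency of the coloured bipartite graph `B_A` of a tropical matrix. -/
def BAdj {r c : ℕ} (A : Fin r → Fin c → Trop) :
    (Fin r ⊕ Fin c) → (Fin r ⊕ Fin c) → Prop
  | Sum.inl i, Sum.inr j => A i j ≠ ⊥
  | Sum.inr j, Sum.inl i => A i j ≠ ⊥
  | _, _ => False

/-- Connectedness of the bipartite graph `B_A`. -/
def BConnected {r c : ℕ} (A : Fin r → Fin c → Trop) : Prop :=
  ∀ x y : Fin r ⊕ Fin c, Relation.ReflTransGen (BAdj A) x y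

/-- `lam` is a tropical eigenvalue of `P`. -/
def IsEig {n : ℕ} (P : Fin n → Fin n → Trop) (lam : Trop) : Prop :=
  ∃ v : Fin n → Trop, v ≠ (fun _ => ⊥) ∧ tvmul P v = fun i => lam + v i

/-- The group `G_A` of monomial matrices `P` with `C(PA) = C(A)`. -/
def GA {r c : ℕ} (A : Fin r → Fin c → Trop) : Set (Fin r → Fin r → Trop) :=
  {P | IsMonomial P ∧ colSpace (tmul P A) = colSpace A}

/-- The dual group `{}_AG` of monomial matrices `Q` with `R(AQ) = R(A)`. -/
def AGr {r c : ℕ} (A : Fin r → Fin c → Trop) : Set (Fin c → Fin c → Trop) :=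
  {Q | IsMonomial Q ∧ rowSpace (tmul A Q) = rowSpace A}

section Aux

open Finset

variable {r c : ℕ}

/-- bottom vector -/
def botv (r : ℕ) : Fin r → Trop := fun _ => ⊥

lemma trop_add_sup (cc a b : Trop) : cc + (a ⊔ b) = (cc + a) ⊔ (cc + b) := by
  rcases le_total a b with h | h
  · rw [sup_eq_right.2 h, sup_eq_right.2 (add_le_add (le_refl cc) h)]
  · rw [sup_eq_left.2 h, sup_eq_left.2 (add_le_add (le_refl cc) h)]

lemma finsup_add {ι : Type*} (s : Finset ι) (hs : s.Nonempty) (cc : Trop) (f : ι → Trop) :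
    s.sup (fun k => cc + f k) = cc + s.sup f := by
  obtain ⟨k₀, hk₀, hsup⟩ := s.exists_mem_eq_sup hs f
  apply le_antisymm
  · exact Finset.sup_le fun k hk => add_le_add (le_refl cc) (Finset.le_sup hk)
  · rw [hsup]; exact Finset.le_sup (f := fun k => cc + f k) hk₀

lemma tvmul_eq_sup {n m : ℕ} (M : Fin n → Fin m → Trop) (x : Fin m → Trop) :
    tvmul M x = Finset.univ.sup (fun j => fun i => x j + M i j) := by
  funext i
  rw [Finset.sup_apply]
  unfold tvmul
  exact Finset.sup_congr rfl (fun k _ => add_comm _ _)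

lemma genBy_submodule (G : Set (Fin r → Trop)) : IsTropSubmodule (genBy G) := by
  constructor
  · intro x hx y hy S hS
    exact hS.1.1 x (hx S hS) y (hy S hS)
  · intro cc x hx S hS
    exact hS.1.2 cc x (hx S hS)

lemma subset_genBy (G : Set (Fin r → Trop)) : G ⊆ genBy G := by
  intro v hv S hS; exact hS.2 hv

lemma genBy_subset {G S : Set (Fin r → Trop)} (hS : IsTropSubmodule S) (h : G ⊆ S) :
    genBy G ⊆ S :=
  Set.sInter_subset_of_mem ⟨hS, h⟩

lemma mem_colSpace_col {n m : ℕ} (M : Fin n → Fin m → Trop) (j : Fin m) :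
    (fun i => M i j) ∈ colSpace M :=
  subset_genBy _ ⟨j, rfl⟩

lemma sup_mem {ι : Type*} {S : Set (Fin r → Trop)} (hS : IsTropSubmodule S)
    (hbot : botv r ∈ S) (s : Finset ι) (g : ι → (Fin r → Trop))
    (hg : ∀ j ∈ s, g j ∈ S) : s.sup g ∈ S := by
  induction s using Finset.induction_on with
  | empty => rw [Finset.sup_empty]; exact hbot
  | insert _ _ hx ih =>
      rw [Finset.sup_insert]
      exact hS.1 _ (hg _ (Finset.mem_insert_self _ _)) _
        (ih fun j hj => hg j (Finset.mem_insert_of_mem hj))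

lemma botv_mem_colSpace {n m : ℕ} (M : Fin n → Fin m → Trop) (hm : 0 < m) :
    botv n ∈ colSpace M := by
  have h := (genBy_submodule _).2 ⊥ _ (mem_colSpace_col M ⟨0, hm⟩)
  simp only [WithBot.bot_add] at h; exact h

lemma tvmul_mem_colSpace {n m : ℕ} (M : Fin n → Fin m → Trop) (hm : 0 < m)
    (x : Fin m → Trop) : tvmul M x ∈ colSpace M := by
  rw [tvmul_eq_sup]
  exact sup_mem (genBy_submodule _) (botv_mem_colSpace M hm) _ _
    (fun j _ => (genBy_submodule _).2 (x j) _ (mem_colSpace_col M j))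

lemma colSpace_eq {n m : ℕ} (M : Fin n → Fin m → Trop) (hm : 0 < m) :
    colSpace M = {v | ∃ x, v = tvmul M x} := by
  apply Set.Subset.antisymm
  · apply genBy_subset
    · constructor
      · rintro x ⟨a, rfl⟩ y ⟨b, rfl⟩
        refine ⟨a ⊔ b, ?_⟩
        funext i
        show tvmul M a i ⊔ tvmul M b i = _
        unfold tvmul
        rw [← Finset.sup_sup]
        exact Finset.sup_congr rfl fun k _ => (trop_add_sup _ _ _).symm
      · rintro cc x ⟨a, rfl⟩
        refine ⟨fun k => cc + a k, ?_⟩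
        funext i
        show cc + tvmul M a i = _
        haveI : Nonempty (Fin m) := ⟨⟨0, hm⟩⟩
        unfold tvmul
        rw [← finsup_add _ Finset.univ_nonempty]
        exact Finset.sup_congr rfl fun k _ => by
          show cc + (M i k + a k) = M i k + (cc + a k)
          rw [← add_assoc, add_comm cc (M i k), add_assoc]
    · rintro v ⟨j, rfl⟩
      refine ⟨fun k => if k = j then ((0:ℝ) : Trop) else ⊥, ?_⟩
      funext i
      show M i j = tvmul M _ i
      unfold tvmul
      apply le_antisymm
      · have h := Finset.le_sup (f := fun k => M i k + if k = j then ((0:ℝ):Trop) else ⊥)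
          (Finset.mem_univ j)
        simpa [WithBot.coe_zero] using h
      · apply Finset.sup_le
        intro k _
        by_cases h : k = j
        · subst h; simp [WithBot.coe_zero]
        · simp [h]
  · rintro v ⟨x, rfl⟩
    exact tvmul_mem_colSpace M hm x

lemma rowSpace_eq_colSpace_transpose {n m : ℕ} (M : Fin n → Fin m → Trop) :
    rowSpace M = colSpace (fun a b => M b a) := rfl

end Aux
section Extremal

variable {r : ℕ}

/-- Extremal element of a tropical submodule. -/
def Extremal (S : Set (Fin r → Trop)) (v : Fin r → Trop) : Prop :=
  v ∈ S ∧ v ≠ botv r ∧ ∀ x ∈ S, ∀ y ∈ S, v = x ⊔ y → v = x ∨ v = y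

lemma extremal_of_sup {ι : Type*} {S : Set (Fin r → Trop)} (hS : IsTropSubmodule S)
    (hbot : botv r ∈ S) {v : Fin r → Trop} (hv : Extremal S v)
    (s : Finset ι) (g : ι → (Fin r → Trop)) (hg : ∀ j ∈ s, g j ∈ S)
    (heq : v = s.sup g) : ∃ j ∈ s, v = g j := by
  induction s using Finset.induction_on with
  | empty =>
      exfalso
      apply hv.2.1
      rw [heq]
      rfl
  | @insert a s ha ih =>
      rw [Finset.sup_insert] at heq
      have hsup : s.sup g ∈ S :=
        sup_mem hS hbot s g fun j hj => hg j (Finset.mem_insert_of_mem hj)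
      rcases hv.2.2 _ (hg a (Finset.mem_insert_self _ _)) _ hsup heq with h | h
      · exact ⟨a, Finset.mem_insert_self _ _, h⟩
      · obtain ⟨j, hj, hj'⟩ := ih (fun j hj => hg j (Finset.mem_insert_of_mem hj)) h
        exact ⟨j, Finset.mem_insert_of_mem hj, hj'⟩

lemma extremal_imp_col {n m : ℕ} (M : Fin n → Fin m → Trop) (hm : 0 < m)
    {v : Fin n → Trop} (hv : Extremal (colSpace M) v) :
    ∃ (j : Fin m) (t : ℝ), v = fun i => ((t : ℝ) : Trop) + M i j := by
  have hmem := hv.1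
  rw [colSpace_eq M hm] at hmem
  obtain ⟨x, rfl0⟩ := hmem
  have heq : v = Finset.univ.sup (fun j => fun i => x j + M i j) := by
    rw [rfl0]; exact tvmul_eq_sup M x
  obtain ⟨j, -, hj⟩ := extremal_of_sup (genBy_submodule _) (botv_mem_colSpace M hm) hv
    Finset.univ _ (fun j _ => (genBy_submodule _).2 (x j) _ (mem_colSpace_col M j)) heq
  rcases hxj : x j with _ | t
  · exfalso
    apply hv.2.1
    rw [hj]
    funext i
    rw [hxj]
    show ⊥ + M i j = ⊥
    exact WithBot.bot_add _
  · exact ⟨j, t, by rw [hj]; funext i; rw [hxj]; rfl⟩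

lemma iso_extremal {n m : ℕ} {S : Set (Fin n → Trop)} {S' : Set (Fin m → Trop)}
    {f : (Fin n → Trop) → (Fin m → Trop)}
    (hSmod : IsTropSubmodule S)
    (hbij : Set.BijOn f S S')
    (hsup : ∀ x ∈ S, ∀ y ∈ S, f (x ⊔ y) = f x ⊔ f y)
    (hbotS : botv n ∈ S) (hfbot : f (botv n) = botv m)
    {v : Fin n → Trop} (hv : Extremal S v) : Extremal S' (f v) := by
  refine ⟨hbij.mapsTo hv.1, ?_, ?_⟩
  · intro h
    apply hv.2.1
    apply hbij.injOn hv.1 hbotS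
    rw [h, hfbot]
  · intro x hx y hy hxy
    obtain ⟨a, ha, rfl⟩ := hbij.surjOn hx
    obtain ⟨b, hb, rfl⟩ := hbij.surjOn hy
    have hab : a ⊔ b ∈ S := hSmod.1 a ha b hb
    have hfab : f (a ⊔ b) = f v := by rw [hsup a ha b hb, ← hxy]
    have hveq : v = a ⊔ b := hbij.injOn hv.1 hab hfab.symm
    rcases hv.2.2 a ha b hb hveq with h | h
    · exact Or.inl (by rw [h])
    · exact Or.inr (by rw [h])

end Extremal
section Pigeonhole

lemma col_extremal {n : ℕ} (M : Fin n → Fin n → ℝ)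
    (hgen : ∀ i₁ i₂ j k, i₁ ≠ i₂ → j ≠ k → M i₁ j + M i₂ k ≠ M i₂ j + M i₁ k)
    (hn : 0 < n) (j : Fin n) :
    Extremal (colSpace (fun i k => ((M i k : ℝ) : Trop))) (fun i => ((M i j : ℝ) : Trop)) := by
  set Mh : Fin n → Fin n → Trop := fun i k => ((M i k : ℝ) : Trop) with hMh
  refine ⟨mem_colSpace_col Mh j, ?_, ?_⟩
  · intro h
    have := congrFun h j
    simp [botv] at this
  · intro x hx y hy hxy
    by_contra hcon
    push_neg at hcon
    obtain ⟨hvx, hvy⟩ := hcon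
    -- both x and y lie below the column
    have hxle : ∀ l, x l ≤ ((M l j : ℝ) : Trop) := fun l => by
      have := congrFun hxy l; exact le_sup_left.trans_eq this.symm
    have hyle : ∀ l, y l ≤ ((M l j : ℝ) : Trop) := fun l => by
      have := congrFun hxy l; exact le_sup_right.trans_eq this.symm
    -- the key witness extraction
    have key : ∀ (u : Fin n → Trop), u ∈ colSpace Mh → (∀ l, u l ≤ ((M l j : ℝ) : Trop)) →
        u ≠ (fun i => ((M i j : ℝ) : Trop)) → ∀ i, u i = ((M i j : ℝ) : Trop) →
        ∃ (k : Fin n) (t : ℝ), k ≠ j ∧ M i k + t = M i j ∧ ∀ l, M l k + t ≤ M l j := by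
      intro u hu hule hune i hui
      rw [colSpace_eq Mh hn] at hu
      obtain ⟨cu, rfl⟩ := hu
      have hsup : tvmul Mh cu i = Finset.univ.sup (fun k => Mh i k + cu k) := rfl
      obtain ⟨k, -, hk⟩ := Finset.univ.exists_mem_eq_sup ⟨⟨0, hn⟩, Finset.mem_univ _⟩
        (fun k => Mh i k + cu k)
      have hki : Mh i k + cu k = ((M i j : ℝ) : Trop) := by rw [← hk, ← hsup, hui]
      rcases hcu : cu k with _ | t
      · exfalso
        have hb : Mh i k + cu k = (⊥ : Trop) := by rw [hcu]; exact WithBot.add_bot _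
        rw [hb] at hki
        exact WithBot.bot_ne_coe hki
      · rw [hcu] at hki
        have hki' : M i k + t = M i j := by
          have : ((M i k + t : ℝ) : Trop) = ((M i j : ℝ) : Trop) := by
            rw [WithBot.coe_add]; exact hki
          exact_mod_cast this
        have hlle : ∀ l, M l k + t ≤ M l j := by
          intro l
          have h1 : Mh l k + cu k ≤ tvmul Mh cu l :=
            Finset.le_sup (f := fun k => Mh l k + cu k) (Finset.mem_univ k)
          have h2 := (h1.trans (hule l))
          rw [hcu] at h2
          have : ((M l k + t : ℝ) : Trop) ≤ ((M l j : ℝ) : Trop) := by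
            rw [WithBot.coe_add]; exact h2
          exact_mod_cast this
        by_cases hkj : k = j
        · exfalso
          apply hune
          subst hkj
          have ht0 : t = 0 := by have := hki'; linarith
          funext l
          apply le_antisymm (hule l)
          have h1 : Mh l k + cu k ≤ tvmul Mh cu l :=
            Finset.le_sup (f := fun k' => Mh l k' + cu k') (Finset.mem_univ k)
          rw [hcu] at h1
          calc ((M l k : ℝ) : Trop) = ((M l k + t : ℝ) : Trop) := by rw [ht0]; norm_num
            _ = Mh l k + (t : ℝ) := by rw [WithBot.coe_add]
            _ ≤ tvmul Mh cu l := h1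
        · exact ⟨k, t, hkj, hki', hlle⟩
    -- get a witness for every coordinate
    have choice : ∀ i, ∃ (k : Fin n) (t : ℝ), k ≠ j ∧ M i k + t = M i j ∧
        ∀ l, M l k + t ≤ M l j := by
      intro i
      have hcoord : x i = ((M i j : ℝ) : Trop) ∨ y i = ((M i j : ℝ) : Trop) := by
        have hpt : x i ⊔ y i = ((M i j : ℝ) : Trop) := by
          have h' := (congrFun hxy i).symm
          rw [Pi.sup_apply] at h'
          exact h'
        rcases le_total (x i) (y i) with h | h
        · right; rw [← hpt]; exact (sup_eq_right.2 h).symm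
        · left; rw [← hpt]; exact (sup_eq_left.2 h).symm
      rcases hcoord with h | h
      · exact key x hx hxle (Ne.symm hvx) i h
      · exact key y hy hyle (Ne.symm hvy) i h
    choose k t hkj hkeq hkle using choice
    -- pigeonhole
    have hninj : ¬ Function.Injective k := by
      intro hinj
      obtain ⟨i, hi⟩ := (Finite.injective_iff_surjective.1 hinj) j
      exact hkj i hi
    obtain ⟨a, b, hab, hne⟩ := Function.not_injective_iff.1 hninj
    have h1 : t a ≤ t b := by
      have := hkle a b
      rw [hab] at this
      have := hkeq b
      linarith
    have h2 : t b ≤ t a := by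
      have := hkle b a
      rw [← hab] at this
      have := hkeq a
      linarith
    have hta : t a = t b := le_antisymm h1 h2
    apply hgen a b j (k a) hne (fun h => hkj a h.symm)
    have e1 := hkeq a
    have e2 := hkeq b
    rw [← hab] at e2
    linarith

end Pigeonhole
section Residuation

open Finset

/-- real max-plus matrix-vector product -/
noncomputable def rmulv {r n : ℕ} [Nonempty (Fin n)] (M : Fin r → Fin n → ℝ)
    (x : Fin n → ℝ) : Fin r → ℝ :=
  fun i => Finset.univ.sup' Finset.univ_nonempty fun k => M i k + x k

/-- residuation -/
noncomputable def resid {r n : ℕ} [Nonempty (Fin r)] (M : Fin r → Fin n → ℝ)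
    (v : Fin r → ℝ) : Fin n → ℝ :=
  fun k => Finset.univ.inf' Finset.univ_nonempty fun i => v i - M i k

lemma tvmul_coe {r n : ℕ} [Nonempty (Fin n)] (M : Fin r → Fin n → ℝ) (x : Fin n → ℝ) :
    tvmul (fun i k => ((M i k : ℝ) : Trop)) (fun k => ((x k : ℝ) : Trop)) =
      fun i => ((rmulv M x i : ℝ) : Trop) := by
  funext i
  unfold tvmul rmulv
  rw [Finset.coe_sup']
  exact Finset.sup_congr rfl fun k _ => by rw [Function.comp_apply, WithBot.coe_add]

lemma le_resid {r n : ℕ} [Nonempty (Fin r)] {M : Fin r → Fin n → ℝ} {y : Fin n → ℝ}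
    {v : Fin r → ℝ} (h : ∀ i k, M i k + y k ≤ v i) : y ≤ resid M v := by
  intro k
  unfold resid
  rw [Finset.le_inf'_iff]
  intro i _
  linarith [h i k]

lemma rmulv_le_resid {r n : ℕ} [Nonempty (Fin n)] [Nonempty (Fin r)]
    (M : Fin r → Fin n → ℝ) (x : Fin n → ℝ) : x ≤ resid M (rmulv M x) := by
  apply le_resid
  intro i k
  exact Finset.le_sup' (fun k => M i k + x k) (Finset.mem_univ k)

lemma rmulv_mono {r n : ℕ} [Nonempty (Fin n)] (M : Fin r → Fin n → ℝ)
    {x y : Fin n → ℝ} (h : x ≤ y) : rmulv M x ≤ rmulv M y := by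
  intro i
  apply Finset.sup'_le
  intro k _
  exact le_trans (by linarith [h k]) (Finset.le_sup' (fun k => M i k + y k) (Finset.mem_univ k))

lemma rmulv_resid {r n : ℕ} [Nonempty (Fin n)] [Nonempty (Fin r)]
    (M : Fin r → Fin n → ℝ) (x : Fin n → ℝ) :
    rmulv M (resid M (rmulv M x)) = rmulv M x := by
  apply le_antisymm
  · intro i
    apply Finset.sup'_le
    intro k _
    have h1 : resid M (rmulv M x) k ≤ rmulv M x i - M i k :=
      Finset.inf'_le (fun i => rmulv M x i - M i k) (Finset.mem_univ i)
    linarith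
  · exact rmulv_mono M (rmulv_le_resid M x)

lemma neg_inf' {ι : Type*} (s : Finset ι) (hs : s.Nonempty) (f : ι → ℝ) :
    s.sup' hs (fun i => - f i) = - s.inf' hs f := by
  apply le_antisymm
  · apply Finset.sup'_le
    intro i hi
    have := Finset.inf'_le f hi
    linarith
  · obtain ⟨i₀, hi₀, h⟩ := s.exists_mem_eq_inf' hs f
    rw [h]
    exact Finset.le_sup' (fun i => - f i) hi₀

/-- membership in the row space for real vectors, via residuation -/
lemma mem_rowSpace_iff {r n : ℕ} [Nonempty (Fin n)] [Nonempty (Fin r)]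
    (M : Fin r → Fin n → ℝ) (z : Fin n → ℝ) :
    ((fun j => ((z j : ℝ) : Trop)) ∈ rowSpace (fun i j => ((M i j : ℝ) : Trop))) ↔
      resid M (rmulv M (fun k => - z k)) = fun k => - z k := by
  have hr : (0 : ℕ) < r := Fin.pos_iff_nonempty.2 ‹_›
  rw [rowSpace_eq_colSpace_transpose, colSpace_eq _ hr]
  constructor
  · rintro ⟨u, hu⟩
    funext k
    apply le_antisymm
    · -- find attaining index
      have hk := congrFun hu k
      -- z k = sup_i (M i k + u i)
      have hsupne : (Finset.univ : Finset (Fin r)).Nonempty := Finset.univ_nonempty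
      obtain ⟨i, -, hi⟩ := Finset.univ.exists_mem_eq_sup hsupne
        (fun i => ((M i k : ℝ) : Trop) + u i)
      have hk' : (Finset.univ.sup fun i => ((M i k : ℝ) : Trop) + u i) = ((z k : ℝ) : Trop) := by
        rw [hk]; rfl
      have hki : ((M i k : ℝ) : Trop) + u i = ((z k : ℝ) : Trop) := by
        rw [← hi]; exact hk'
      rcases hcu : u i with _ | t
      · exfalso
        have hb : ((M i k : ℝ) : Trop) + u i = (⊥ : Trop) := by
          rw [hcu]; exact WithBot.add_bot _
        rw [hb] at hki
        exact WithBot.bot_ne_coe hki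
      · rw [hcu] at hki
        have hki' : M i k + t = z k := by
          have : ((M i k + t : ℝ) : Trop) = ((z k : ℝ) : Trop) := by
            rw [WithBot.coe_add]; exact hki
          exact_mod_cast this
        have hle : ∀ l, M i l + t ≤ z l := by
          intro l
          have h1 : ((M i l : ℝ) : Trop) + u i ≤ tvmul (fun a b => ((M b a : ℝ) : Trop)) u l :=
            Finset.le_sup (f := fun i' => ((M i' l : ℝ) : Trop) + u i') (Finset.mem_univ i)
          rw [← hu] at h1
          rw [hcu] at h1
          have : ((M i l + t : ℝ) : Trop) ≤ ((z l : ℝ) : Trop) := by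
            rw [WithBot.coe_add]; exact h1
          exact_mod_cast this
        have h2 : resid M (rmulv M (fun k' => - z k')) k ≤ rmulv M (fun k' => - z k') i - M i k :=
          Finset.inf'_le _ (Finset.mem_univ i)
        have h3 : rmulv M (fun k' => - z k') i ≤ - t := by
          apply Finset.sup'_le
          intro l _
          show M i l + - z l ≤ - t
          have := hle l
          linarith
        calc resid M (rmulv M (fun k' => - z k')) k ≤ rmulv M (fun k' => - z k') i - M i k := h2
          _ ≤ - t - M i k := by linarith
          _ = - z k := by linarith
    · exact le_resid (M := M) (y := fun k' => - z k') (v := rmulv M (fun k' => - z k')) (fun i k' => Finset.le_sup' (fun l => M i l + - z l) (Finset.mem_univ k')) k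
  · intro h
    refine ⟨fun i => ((- rmulv M (fun k => - z k) i : ℝ) : Trop), ?_⟩
    funext k
    have : tvmul (fun a b => ((M b a : ℝ) : Trop))
        (fun i => ((- rmulv M (fun k => - z k) i : ℝ) : Trop)) k
        = ((Finset.univ.sup' Finset.univ_nonempty
            (fun i => M i k + - rmulv M (fun k => - z k) i) : ℝ) : Trop) := by
      unfold tvmul
      rw [Finset.coe_sup']
      exact Finset.sup_congr rfl fun i _ => by rw [Function.comp_apply, WithBot.coe_add]
    rw [this]
    congr 1
    have hneg : Finset.univ.sup' Finset.univ_nonempty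
        (fun i => M i k + - rmulv M (fun k => - z k) i)
        = - Finset.univ.inf' Finset.univ_nonempty
            (fun i => rmulv M (fun k => - z k) i - M i k) := by
      rw [← neg_inf']
      exact Finset.sup'_congr _ rfl fun i _ => by ring
    rw [hneg]
    have := congrFun h k
    unfold resid at this
    rw [this]
    ring

end Residuation
section Indep

/-- inner guarded sum -/
def gsum {n : ℕ} (c : Fin n → Fin n → ℤ) (M : Fin n → Fin n → ℝ) : ℝ :=
  ∑ i, ∑ j, if i = j then 0 else (c i j : ℝ) * M i j

lemma gsum_eq {n : ℕ} (c : Fin n → Fin n → ℤ) (M : Fin n → Fin n → ℝ)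
    (hdiag : ∀ i, M i i = 0) :
    gsum c M = ∑ i, ∑ j, (c i j : ℝ) * M i j := by
  unfold gsum
  refine Finset.sum_congr rfl fun i _ => Finset.sum_congr rfl fun j _ => ?_
  by_cases h : i = j
  · subst h; rw [if_pos rfl, hdiag, mul_zero]
  · rw [if_neg h]

lemma sum_point {n : ℕ} (s t : Fin n) (g : Fin n → Fin n → ℝ) :
    ∑ p, ∑ q, (if p = s ∧ q = t then (1:ℝ) else 0) * g p q = g s t := by
  have : ∀ p q, (if p = s ∧ q = t then (1:ℝ) else 0) * g p q
      = if p = s then (if q = t then g s t else 0) else 0 := by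
    intro p q
    by_cases h1 : p = s
    · by_cases h2 : q = t
      · subst h1; subst h2; simp
      · simp [h1, h2]
    · simp [h1]
  simp only [this]
  simp

lemma gsum_four {n : ℕ} (M : Fin n → Fin n → ℝ) (s₁ s₂ t₁ t₂ : Fin n) :
    gsum (fun p q => (if p = s₁ ∧ q = t₁ then (1:ℤ) else 0) + (if p = s₂ ∧ q = t₂ then 1 else 0)
      - (if p = s₁ ∧ q = t₂ then 1 else 0) - (if p = s₂ ∧ q = t₁ then 1 else 0)) M
    - (M s₁ t₁ + M s₂ t₂ - M s₁ t₂ - M s₂ t₁)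
    = gsum (fun p q => (if p = s₁ ∧ q = t₁ then (1:ℤ) else 0) + (if p = s₂ ∧ q = t₂ then 1 else 0)
      - (if p = s₁ ∧ q = t₂ then 1 else 0) - (if p = s₂ ∧ q = t₁ then 1 else 0)) M
    - (M s₁ t₁ + M s₂ t₂ - M s₁ t₂ - M s₂ t₁) := rfl

lemma gsum_val {n : ℕ} (M : Fin n → Fin n → ℝ) (hdiag : ∀ i, M i i = 0) (s₁ s₂ t₁ t₂ : Fin n) :
    gsum (fun p q => (if p = s₁ ∧ q = t₁ then (1:ℤ) else 0) + (if p = s₂ ∧ q = t₂ then 1 else 0)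
      - (if p = s₁ ∧ q = t₂ then 1 else 0) - (if p = s₂ ∧ q = t₁ then 1 else 0)) M
    = M s₁ t₁ + M s₂ t₂ - M s₁ t₂ - M s₂ t₁ := by
  rw [gsum_eq _ _ hdiag]
  have expand : ∀ p q, (((if p = s₁ ∧ q = t₁ then (1:ℤ) else 0) + (if p = s₂ ∧ q = t₂ then 1 else 0)
      - (if p = s₁ ∧ q = t₂ then 1 else 0) - (if p = s₂ ∧ q = t₁ then 1 else 0) : ℤ) : ℝ) * M p q
      = (if p = s₁ ∧ q = t₁ then (1:ℝ) else 0) * M p q + (if p = s₂ ∧ q = t₂ then (1:ℝ) else 0) * M p q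
      - (if p = s₁ ∧ q = t₂ then (1:ℝ) else 0) * M p q - (if p = s₂ ∧ q = t₁ then (1:ℝ) else 0) * M p q := by
    intro p q
    push_cast
    ring
  simp only [expand]
  simp only [Finset.sum_sub_distrib, Finset.sum_add_distrib]
  rw [sum_point, sum_point, sum_point, sum_point]

/-- two-term version -/
lemma gsum_two {n : ℕ} (M : Fin n → Fin n → ℝ) (hdiag : ∀ i, M i i = 0) (s₁ s₂ t₁ t₂ : Fin n) :
    gsum (fun p q => (if p = s₁ ∧ q = t₁ then (1:ℤ) else 0) + (if p = s₂ ∧ q = t₂ then 1 else 0)) M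
    = M s₁ t₁ + M s₂ t₂ := by
  rw [gsum_eq _ _ hdiag]
  have expand : ∀ p q, (((if p = s₁ ∧ q = t₁ then (1:ℤ) else 0) + (if p = s₂ ∧ q = t₂ then 1 else 0) : ℤ) : ℝ) * M p q
      = (if p = s₁ ∧ q = t₁ then (1:ℝ) else 0) * M p q + (if p = s₂ ∧ q = t₂ then (1:ℝ) else 0) * M p q := by
    intro p q; push_cast; ring
  simp only [expand]
  simp only [Finset.sum_add_distrib]
  rw [sum_point, sum_point]

end Indep
section IndepTransfer

variable {z : ℕ} {nsz : Fin z → ℕ} {A : ∀ α : Fin z, Fin (nsz α) → Fin (nsz α) → ℝ}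

lemma pair_coeff_zero
    (hindep : ∀ c : ∀ α : Fin z, Fin (nsz α) → Fin (nsz α) → ℤ,
      (∑ α, ∑ i, ∑ j, if i = j then (0 : ℝ) else (c α i j : ℝ) * A α i j) = 0 →
      ∀ α i j, i ≠ j → c α i j = 0)
    {γ δ : Fin z} (hγδ : γ ≠ δ)
    (cG : Fin (nsz γ) → Fin (nsz γ) → ℤ) (cD : Fin (nsz δ) → Fin (nsz δ) → ℤ)
    (hsum : gsum cG (A γ) + gsum cD (A δ) = 0) :
    ∀ i j, i ≠ j → cG i j = 0 := by
  let c : ∀ α' : Fin z, Fin (nsz α') → Fin (nsz α') → ℤ := fun α' =>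
    if h : α' = γ then
      (fun i j => cG (Fin.cast (congrArg nsz h) i) (Fin.cast (congrArg nsz h) j))
    else if h' : α' = δ then
      (fun i j => cD (Fin.cast (congrArg nsz h') i) (Fin.cast (congrArg nsz h') j))
    else 0
  have hcγ : c γ = cG := by
    show (if h : γ = γ then _ else _) = cG
    rw [dif_pos rfl]
    funext i j
    congr 1
  have hcδ : c δ = cD := by
    show (if h : δ = γ then _ else _) = cD
    rw [dif_neg (fun h => hγδ h.symm), dif_pos rfl]
    funext i j
    congr 1
  have hc0 : ∀ α', α' ≠ γ → α' ≠ δ → c α' = 0 := by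
    intro α' h1 h2
    show (if h : α' = γ then _ else _) = 0
    rw [dif_neg h1, dif_neg h2]
  have hS : (∑ α', ∑ i, ∑ j, if i = j then (0 : ℝ) else (c α' i j : ℝ) * A α' i j) = 0 := by
    have hsum' : (∑ α', gsum (c α') (A α')) = gsum (c γ) (A γ) + gsum (c δ) (A δ) := by
      apply Finset.sum_eq_add_of_mem γ δ (Finset.mem_univ _) (Finset.mem_univ _) hγδ
      intro e _ ⟨h1, h2⟩
      rw [hc0 e h1 h2]
      simp [gsum]
    have : (∑ α', ∑ i, ∑ j, if i = j then (0 : ℝ) else (c α' i j : ℝ) * A α' i j)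
        = ∑ α', gsum (c α') (A α') := rfl
    rw [this, hsum', hcγ, hcδ, hsum]
  have := hindep c hS γ
  rw [hcγ] at this
  exact this

lemma hgen_of_indep
    (hindep : ∀ c : ∀ α : Fin z, Fin (nsz α) → Fin (nsz α) → ℤ,
      (∑ α, ∑ i, ∑ j, if i = j then (0 : ℝ) else (c α i j : ℝ) * A α i j) = 0 →
      ∀ α i j, i ≠ j → c α i j = 0)
    (hdiag : ∀ α i, A α i i = 0)
    {γ δ : Fin z} (hγδ : γ ≠ δ) :
    ∀ i₁ i₂ j k : Fin (nsz γ), i₁ ≠ i₂ → j ≠ k →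
      A γ i₁ j + A γ i₂ k ≠ A γ i₂ j + A γ i₁ k := by
  intro i₁ i₂ j k h12 hjk heq
  set cG : Fin (nsz γ) → Fin (nsz γ) → ℤ := fun p q =>
    (if p = i₁ ∧ q = j then (1:ℤ) else 0) + (if p = i₂ ∧ q = k then 1 else 0)
    - (if p = i₁ ∧ q = k then 1 else 0) - (if p = i₂ ∧ q = j then 1 else 0) with hcG
  have hval : gsum cG (A γ) = A γ i₁ j + A γ i₂ k - A γ i₁ k - A γ i₂ j :=
    gsum_val (A γ) (hdiag γ) i₁ i₂ j k
  have hsum : gsum cG (A γ) + gsum (fun _ _ => (0:ℤ)) (A δ) = 0 := by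
    have h0 : gsum (fun _ _ => (0:ℤ)) (A δ) = 0 := by simp [gsum]
    rw [hval, h0]
    linarith
  have hz := pair_coeff_zero hindep hγδ cG _ hsum
  by_cases h1j : i₁ = j
  · have h2j : i₂ ≠ j := fun h => h12 (h.trans h1j.symm).symm
    have := hz i₂ j h2j
    rw [hcG] at this
    simp [h12.symm, hjk] at this
  · have := hz i₁ j h1j
    rw [hcG] at this
    simp [h12, hjk] at this

end IndepTransfer
/-- Square real (all-finite) tropical matrices of size ≥ 2 with zero
diagonals, whose off-diagonal entries are all nonzero and together are ℤ-linearly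
independent (i.e. form a basis of a free abelian subgroup of `(ℝ, +)`), have pairwise
non-isomorphic tropical column spaces. -/
theorem stmt_19 (z : ℕ) (nsz : Fin z → ℕ)
    (A : ∀ α : Fin z, Fin (nsz α) → Fin (nsz α) → ℝ)
    (hsize : ∀ α, 2 ≤ nsz α)
    (hdiag : ∀ α i, A α i i = 0)
    (hnz : ∀ α i j, i ≠ j → A α i j ≠ 0)
    (hindep : ∀ c : ∀ α : Fin z, Fin (nsz α) → Fin (nsz α) → ℤ,
      (∑ α, ∑ i, ∑ j, if i = j then (0 : ℝ) else (c α i j : ℝ) * A α i j) = 0 →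
      ∀ α i j, i ≠ j → c α i j = 0)
    (α β : Fin z) (hne : α ≠ β) :
    ¬ TropIso (colSpace (fun i j => ((A α i j : ℝ) : Trop)))
              (colSpace (fun i j => ((A β i j : ℝ) : Trop))) := by
  rintro ⟨f, hbij, hsup, hscale⟩
  have hn : 0 < nsz α := lt_of_lt_of_le two_pos (hsize α)
  have hm : 0 < nsz β := lt_of_lt_of_le two_pos (hsize β)
  haveI : Nonempty (Fin (nsz α)) := ⟨⟨0, hn⟩⟩
  haveI : Nonempty (Fin (nsz β)) := ⟨⟨0, hm⟩⟩
  have hgenα := hgen_of_indep hindep hdiag hne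
  have hgenβ := hgen_of_indep hindep hdiag hne.symm
  -- abbreviations
  have hSmod : IsTropSubmodule (colSpace (fun i j => ((A α i j : ℝ) : Trop))) :=
    genBy_submodule _
  have hS'mod : IsTropSubmodule (colSpace (fun i j => ((A β i j : ℝ) : Trop))) :=
    genBy_submodule _
  have hbotS : botv (nsz α) ∈ colSpace (fun i j => ((A α i j : ℝ) : Trop)) :=
    botv_mem_colSpace _ hn
  have hfbot : f (botv (nsz α)) = botv (nsz β) := by
    have h := hscale ⊥ _ (mem_colSpace_col (fun i j => ((A α i j : ℝ) : Trop)) ⟨0, hn⟩)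
    have h1 : (fun i => (⊥ : Trop) + ((A α i ⟨0, hn⟩ : ℝ) : Trop)) = botv (nsz α) :=
      funext fun i => WithBot.bot_add _
    have h2 : (fun i => (⊥ : Trop) + f (fun i' => ((A α i' ⟨0, hn⟩ : ℝ) : Trop)) i)
        = botv (nsz β) := funext fun i => WithBot.bot_add _
    rw [h1] at h
    rw [h, h2]
  -- columns of A α are extremal, and map to scaled columns of A β
  have hfc : ∀ j : Fin (nsz α), ∃ (s : Fin (nsz β)) (t : ℝ),
      f (fun i => ((A α i j : ℝ) : Trop)) = fun i => ((t : ℝ) : Trop) + ((A β i s : ℝ) : Trop) := by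
    intro j
    have hext : Extremal (colSpace (fun i k => ((A α i k : ℝ) : Trop)))
        (fun i => ((A α i j : ℝ) : Trop)) := col_extremal (A α) hgenα hn j
    have he2 : Extremal (colSpace (fun i k => ((A β i k : ℝ) : Trop)))
        (f (fun i => ((A α i j : ℝ) : Trop))) :=
      iso_extremal hSmod hbij hsup hbotS hfbot hext
    exact extremal_imp_col _ hm he2
  choose π lam hπ using hfc
  -- π is injective
  have hπinj : Function.Injective π := by
    intro j₁ j₂ hj
    by_contra hne12
    have hc1 : (fun i => ((lam j₂ - lam j₁ : ℝ) : Trop) + ((A α i j₁ : ℝ) : Trop))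
        ∈ colSpace (fun i j => ((A α i j : ℝ) : Trop)) :=
      hSmod.2 _ _ (mem_colSpace_col _ j₁)
    have heqf : f (fun i => ((lam j₂ - lam j₁ : ℝ) : Trop) + ((A α i j₁ : ℝ) : Trop))
        = f (fun i => ((A α i j₂ : ℝ) : Trop)) := by
      rw [hscale _ _ (mem_colSpace_col _ j₁), hπ j₂, ← hj]
      funext i
      rw [congrFun (hπ j₁) i]
      rw [← add_assoc, ← WithBot.coe_add]
      norm_num
    have heq := hbij.injOn hc1 (mem_colSpace_col _ j₂) heqf
    have h1 := congrFun heq j₂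
    have h2 := congrFun heq j₁
    rw [hdiag α j₂] at h1
    rw [hdiag α j₁] at h2
    rw [← WithBot.coe_add] at h1 h2
    have h1' : lam j₂ - lam j₁ + A α j₂ j₁ = 0 := by exact_mod_cast h1
    have h2' : lam j₂ - lam j₁ + 0 = A α j₁ j₂ := by exact_mod_cast h2
    exact hgenα j₁ j₂ j₂ j₁ hne12 (fun h => hne12 h.symm)
      (by rw [hdiag α j₁, hdiag α j₂]; linarith)
  -- the key identity : f ∘ (A α ⊙ ·) = B ⊙ ·
  have hfsup : ∀ (s : Finset (Fin (nsz α))) (g : Fin (nsz α) → (Fin (nsz α) → Trop)),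
      (∀ j ∈ s, g j ∈ colSpace (fun i j => ((A α i j : ℝ) : Trop))) →
      f (s.sup g) = s.sup (fun j => f (g j)) := by
    intro s g hg
    induction s using Finset.induction_on with
    | empty =>
        rw [Finset.sup_empty, Finset.sup_empty]
        have : (⊥ : Fin (nsz α) → Trop) = botv (nsz α) := rfl
        rw [this, hfbot]
        rfl
    | @insert a s ha ih =>
        rw [Finset.sup_insert, Finset.sup_insert]
        rw [hsup _ (hg a (Finset.mem_insert_self _ _)) _
          (sup_mem hSmod hbotS s g fun j hj => hg j (Finset.mem_insert_of_mem hj))]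
        rw [ih fun j hj => hg j (Finset.mem_insert_of_mem hj)]
  have hkey : ∀ x : Fin (nsz α) → Trop,
      f (tvmul (fun i j => ((A α i j : ℝ) : Trop)) x)
      = tvmul (fun i k => ((A β i (π k) + lam k : ℝ) : Trop)) x := by
    intro x
    rw [tvmul_eq_sup, hfsup Finset.univ _
      (fun j _ => hSmod.2 (x j) _ (mem_colSpace_col _ j)), tvmul_eq_sup]
    apply Finset.sup_congr rfl
    intro j _
    rw [hscale (x j) _ (mem_colSpace_col _ j)]
    funext i
    rw [congrFun (hπ j) i]
    show x j + (((lam j : ℝ) : Trop) + ((A β i (π j) : ℝ) : Trop))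
      = x j + ((A β i (π j) + lam j : ℝ) : Trop)
    rw [WithBot.coe_add, add_comm ((A β i (π j) : ℝ) : Trop) ((lam j : ℝ) : Trop)]
  -- the real matrix B
  set B : Fin (nsz β) → Fin (nsz α) → ℝ := fun i k => A β i (π k) + lam k with hB
  -- kernel equality over the reals
  have hker : ∀ x y : Fin (nsz α) → ℝ,
      rmulv (A α) x = rmulv (A α) y ↔ rmulv B x = rmulv B y := by
    intro x y
    constructor
    · intro h
      have hc : tvmul (fun i j => ((A α i j : ℝ) : Trop)) (fun k => ((x k : ℝ) : Trop))
          = tvmul (fun i j => ((A α i j : ℝ) : Trop)) (fun k => ((y k : ℝ) : Trop)) := by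
        rw [tvmul_coe, tvmul_coe, h]
      have := congrArg f hc
      rw [hkey, hkey] at this
      rw [tvmul_coe, tvmul_coe] at this
      funext i
      have hi := congrFun this i
      exact_mod_cast hi
    · intro h
      have hc : tvmul (fun i k => ((A β i (π k) + lam k : ℝ) : Trop)) (fun k => ((x k : ℝ) : Trop))
          = tvmul (fun i k => ((A β i (π k) + lam k : ℝ) : Trop)) (fun k => ((y k : ℝ) : Trop)) := by
        rw [tvmul_coe, tvmul_coe]
        rw [hB] at h
        rw [h]
      rw [← hkey, ← hkey] at hc
      have := hbij.injOn (tvmul_mem_colSpace _ hn _) (tvmul_mem_colSpace _ hn _) hc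
      rw [tvmul_coe, tvmul_coe] at this
      funext i
      have hi := congrFun this i
      exact_mod_cast hi
  -- the projections agree
  have hPeq : ∀ x : Fin (nsz α) → ℝ,
      resid (A α) (rmulv (A α) x) = resid B (rmulv B x) := by
    intro x
    apply le_antisymm
    · have h1 : rmulv B (resid (A α) (rmulv (A α) x)) = rmulv B x :=
        (hker _ _).1 (rmulv_resid (A α) x)
      exact h1 ▸ rmulv_le_resid B _
    · have h1 : rmulv (A α) (resid B (rmulv B x)) = rmulv (A α) x :=
        (hker _ _).2 (rmulv_resid B x)
      exact h1 ▸ rmulv_le_resid (A α) _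
  -- row spaces coincide
  have hrowAB : ∀ w : Fin (nsz α) → ℝ,
      ((fun j => ((w j : ℝ) : Trop)) ∈ rowSpace (fun i j => ((A α i j : ℝ) : Trop)))
      ↔ ((fun j => ((w j : ℝ) : Trop)) ∈ rowSpace (fun i j => ((B i j : ℝ) : Trop))) := by
    intro w
    rw [mem_rowSpace_iff, mem_rowSpace_iff, hPeq]
  have hRS : rowSpace (fun i j => ((A α i j : ℝ) : Trop))
      = rowSpace (fun i j => ((B i j : ℝ) : Trop)) := by
    apply Set.Subset.antisymm
    · apply genBy_subset (genBy_submodule _)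
      rintro v ⟨i, rfl⟩
      exact (hrowAB (A α i)).1 (subset_genBy _ ⟨i, rfl⟩)
    · apply genBy_subset (genBy_submodule _)
      rintro v ⟨i, rfl⟩
      exact (hrowAB (B i)).2 (subset_genBy _ ⟨i, rfl⟩)
  -- rows of A α are extremal in the row space
  have hgenαT : ∀ i₁ i₂ j k : Fin (nsz α), i₁ ≠ i₂ → j ≠ k →
      A α j i₁ + A α k i₂ ≠ A α j i₂ + A α k i₁ := by
    intro i₁ i₂ j k h12 hjk heq
    exact hgenα j k i₁ i₂ hjk h12 (by linarith)
  have hrowext : ∀ i : Fin (nsz α), ∃ (s : Fin (nsz β)) (t : ℝ),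
      (fun j => ((A α i j : ℝ) : Trop)) = fun j => ((t : ℝ) : Trop) + ((B s j : ℝ) : Trop) := by
    intro i
    have hext : Extremal (colSpace (fun p q => ((A α q p : ℝ) : Trop)))
        (fun p => ((A α i p : ℝ) : Trop)) :=
      col_extremal (fun p q => A α q p) hgenαT hn i
    have hext2 : Extremal (rowSpace (fun i j => ((A α i j : ℝ) : Trop)))
        (fun p => ((A α i p : ℝ) : Trop)) := hext
    rw [hRS] at hext2
    have hext3 : Extremal (colSpace (fun p q => ((B q p : ℝ) : Trop)))
        (fun p => ((A α i p : ℝ) : Trop)) := hext2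
    obtain ⟨s, t, hst⟩ := extremal_imp_col _ hm hext3
    exact ⟨s, t, hst⟩
  -- final contradiction
  set i₁ : Fin (nsz α) := ⟨0, hn⟩ with hi₁
  set i₂ : Fin (nsz α) := ⟨1, hsize α⟩ with hi₂
  have h12 : i₁ ≠ i₂ := by
    intro h
    have := congrArg Fin.val h
    simp [hi₁, hi₂] at this
  obtain ⟨s₁, t₁, hrow1⟩ := hrowext i₁
  obtain ⟨s₂, t₂, hrow2⟩ := hrowext i₂
  have hre : ∀ (iv : Fin (nsz α)) (s : Fin (nsz β)) (t : ℝ),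
      ((fun j => ((A α iv j : ℝ) : Trop)) = fun j => ((t : ℝ) : Trop) + ((B s j : ℝ) : Trop)) →
      ∀ j, A α iv j = t + B s j := by
    intro iv s t h j
    have := congrFun h j
    rw [← WithBot.coe_add] at this
    exact_mod_cast this
  have e11 := hre i₁ s₁ t₁ hrow1 i₁
  have e12 := hre i₁ s₁ t₁ hrow1 i₂
  have e21 := hre i₂ s₂ t₂ hrow2 i₁
  have e22 := hre i₂ s₂ t₂ hrow2 i₂
  rw [hdiag α i₁] at e11
  rw [hdiag α i₂] at e22
  rw [hB] at e11 e12 e21 e22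
  simp only [] at e11 e12 e21 e22
  -- relation: A α i₁ i₂ + A α i₂ i₁ + (A β s₁ (π i₁) + A β s₂ (π i₂) - A β s₁ (π i₂) - A β s₂ (π i₁)) = 0
  set cA : Fin (nsz α) → Fin (nsz α) → ℤ := fun p q =>
    (if p = i₁ ∧ q = i₂ then (1:ℤ) else 0) + (if p = i₂ ∧ q = i₁ then 1 else 0) with hcA
  set cB : Fin (nsz β) → Fin (nsz β) → ℤ := fun p q =>
    (if p = s₁ ∧ q = π i₁ then (1:ℤ) else 0) + (if p = s₂ ∧ q = π i₂ then 1 else 0)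
    - (if p = s₁ ∧ q = π i₂ then 1 else 0) - (if p = s₂ ∧ q = π i₁ then 1 else 0) with hcB
  have hsumAB : gsum cA (A α) + gsum cB (A β) = 0 := by
    rw [hcA, hcB, gsum_two (A α) (hdiag α) i₁ i₂ i₂ i₁,
      gsum_val (A β) (hdiag β) s₁ s₂ (π i₁) (π i₂)]
    linarith
  have hz := pair_coeff_zero hindep hne cA cB hsumAB i₁ i₂ h12
  rw [hcA] at hz
  simp [h12, h12.symm] at hz
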